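/- arXiv:2509.03847 — 6 statements merged into one kernel-verified Lean document; each statement's English description precedes it below -/
import Mathlib

section
/- A graph G is α-critical if and only if for every edge ab of G, the independence number of the localization G_{ab} equals α(G) − 1, where G_{ab} is the induced subgraph of G on the vertices not in N_G(a) ∪ N_G(b). -/
open Classical

noncomputable section

variable {V : Type*}

/-- `s` is an independent set of `G`. -/
def IndepSet (G : SimpleGraph V) (s : Set V) : Prop :=
  ∀ ⦃a⦄, a ∈ s → ∀ ⦃b⦄, b ∈ s → ¬ G.Adj a b

/-- The independence number `α(G)`. -/
def alphaNum [Fintype V] (G : SimpleGraph V) : ℕ :=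
  sSup {n | ∃ s : Set V, IndepSet G s ∧ s.ncard = n}

/-- `s` is a maximal independent set of `G`. -/
def MaximalIndep (G : SimpleGraph V) (s : Set V) : Prop :=
  IndepSet G s ∧ ∀ t : Set V, IndepSet G t → s ⊆ t → s = t

/-- `G` is well-covered: all maximal independent sets have cardinality `α(G)`. -/
def WellCovered [Fintype V] (G : SimpleGraph V) : Prop :=
  ∀ s : Set V, MaximalIndep G s → s.ncard = alphaNum G

/-- The open neighborhood `N_G(S)` of a set of vertices. -/
def openNbhd (G : SimpleGraph V) (S : Set V) : Set V :=
  {v | v ∉ S ∧ ∃ u ∈ S, G.Adj u v}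

/-- The closed neighborhood `N_G[S]`. -/
def closedNbhd (G : SimpleGraph V) (S : Set V) : Set V :=
  S ∪ openNbhd G S

/-- The vertex set of the localization `G_S = G - N_G[S]`. -/
def localSet (G : SimpleGraph V) (S : Set V) : Set V :=
  (closedNbhd G S)ᶜ

/-- `G` belongs to the class `W_p`. -/
def Wp (p : ℕ) [Fintype V] (G : SimpleGraph V) : Prop :=
  p ≤ Fintype.card V ∧
    ∀ A : Fin p → Set V,
      (∀ i, IndepSet G (A i)) →
      (∀ i j, i ≠ j → Disjoint (A i) (A j)) →
      ∃ S : Fin p → Set V,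
        (∀ i j, i ≠ j → Disjoint (S i) (S j)) ∧
        (∀ i, IndepSet G (S i) ∧ (S i).ncard = alphaNum G) ∧
        (∀ i, A i ⊆ S i)

/-- `G` is `α`-critical: deleting any edge increases the independence number. -/
def AlphaCritical [Fintype V] (G : SimpleGraph V) : Prop :=
  ∀ a b : V, G.Adj a b → alphaNum G < alphaNum (G.deleteEdges {s(a, b)})

/-- The vertex set of `G_{ab} = G - (N_G(a) ∪ N_G(b))`. -/
def edgeLocalSet (G : SimpleGraph V) (a b : V) : Set V :=
  (G.neighborSet a ∪ G.neighborSet b)ᶜ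

lemma indep_ncard_le_alpha [Fintype V] (G : SimpleGraph V) {s : Set V} (h : IndepSet G s) :
    s.ncard ≤ alphaNum G := by
  apply le_csSup
  · refine ⟨Fintype.card V, ?_⟩
    rintro n ⟨t, -, rfl⟩
    simpa [Set.ncard_univ] using Set.ncard_le_ncard (Set.subset_univ t) Set.finite_univ
  · exact ⟨s, h, rfl⟩

lemma exists_indep_alpha [Fintype V] (G : SimpleGraph V) :
    ∃ s : Set V, IndepSet G s ∧ s.ncard = alphaNum G := by
  have h : alphaNum G ∈ {n | ∃ s : Set V, IndepSet G s ∧ s.ncard = n} := by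
    apply Nat.sSup_mem
    · exact ⟨0, ∅, fun a ha => absurd ha (Set.notMem_empty a), by simp⟩
    · refine ⟨Fintype.card V, ?_⟩
      rintro n ⟨t, -, rfl⟩
      simpa [Set.ncard_univ] using Set.ncard_le_ncard (Set.subset_univ t) Set.finite_univ
  exact h

lemma mem_edgeLocalSet {G : SimpleGraph V} {a b x : V} :
    x ∈ edgeLocalSet G a b ↔ ¬ G.Adj a x ∧ ¬ G.Adj b x := by
  simp [edgeLocalSet, SimpleGraph.neighborSet, not_or]

theorem stmt1 [Fintype V] (G : SimpleGraph V) :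
    AlphaCritical G ↔
      ∀ a b : V, G.Adj a b →
        alphaNum (G.induce (edgeLocalSet G a b)) = alphaNum G - 1 := by
  have key_le : ∀ a b : V, G.Adj a b →
      alphaNum (G.induce (edgeLocalSet G a b)) + 1 ≤ alphaNum G := by
    intro a b hab
    obtain ⟨t, ht, htc⟩ := exists_indep_alpha (G.induce (edgeLocalSet G a b))
    set t' : Set V := Subtype.val '' t with ht'def
    have ht'sub : t' ⊆ edgeLocalSet G a b := by rintro x ⟨y, hy, rfl⟩; exact y.2
    have hanot : a ∉ t' := fun h => (mem_edgeLocalSet.1 (ht'sub h)).2 hab.symm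
    have hins : IndepSet G (insert a t') := by
      rintro x (rfl | hx) y (rfl | hy) hadj
      · exact G.irrefl hadj
      · exact (mem_edgeLocalSet.1 (ht'sub hy)).1 hadj
      · exact (mem_edgeLocalSet.1 (ht'sub hx)).1 hadj.symm
      · obtain ⟨x', hx', rfl⟩ := hx
        obtain ⟨y', hy', rfl⟩ := hy
        exact ht hx' hy' hadj
    have hcard : (insert a t').ncard = t.ncard + 1 := by
      rw [Set.ncard_insert_of_notMem hanot (t'.toFinite),
        Set.ncard_image_of_injective t Subtype.val_injective]
    have := indep_ncard_le_alpha G hins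
    rw [hcard, htc] at this
    exact this
  have alpha_pos : (∃ a b : V, G.Adj a b) → 1 ≤ alphaNum G := by
    rintro ⟨a, b, hab⟩
    have h1 : IndepSet G {a} := by
      rintro x rfl y rfl hadj
      · exact G.irrefl hadj
    have := indep_ncard_le_alpha G h1
    simpa using this
  constructor
  · intro hcrit a b hab
    have hne : a ≠ b := G.ne_of_adj hab
    have hlt := hcrit a b hab
    refine le_antisymm (by have := key_le a b hab; omega) ?_
    set G' := G.deleteEdges {s(a, b)} with hG'
    obtain ⟨s, hs, hsc⟩ := exists_indep_alpha G'
    have hadj' : ∀ x y : V, G'.Adj x y ↔ G.Adj x y ∧ ¬(x = a ∧ y = b) ∧ ¬(x = b ∧ y = a) := by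
      intro x y
      rw [hG', SimpleGraph.deleteEdges_adj]
      simp [Sym2.eq_iff, not_or]
    have ha : a ∈ s := by
      by_contra ha
      have : IndepSet G s := by
        intro x hx y hy hadj
        refine hs hx hy ((hadj' x y).2 ⟨hadj, ?_, ?_⟩)
        · rintro ⟨rfl, rfl⟩; exact ha hx
        · rintro ⟨rfl, rfl⟩; exact ha hy
      have := indep_ncard_le_alpha G this
      omega
    have hb : b ∈ s := by
      by_contra hb
      have : IndepSet G s := by
        intro x hx y hy hadj
        refine hs hx hy ((hadj' x y).2 ⟨hadj, ?_, ?_⟩)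
        · rintro ⟨rfl, rfl⟩; exact hb hy
        · rintro ⟨rfl, rfl⟩; exact hb hx
      have := indep_ncard_le_alpha G this
      omega
    set u : Set V := s \ {a, b} with hu
    have husub : u ⊆ edgeLocalSet G a b := by
      rintro x ⟨hxs, hxab⟩
      simp only [Set.mem_insert_iff, Set.mem_singleton_iff, not_or] at hxab
      refine mem_edgeLocalSet.2 ⟨fun h => ?_, fun h => ?_⟩
      · exact hs ha hxs ((hadj' a x).2 ⟨h, fun h' => hxab.2 h'.2, fun h' => hne h'.1⟩)
      · exact hs hb hxs ((hadj' b x).2 ⟨h, fun h' => hne h'.1.symm, fun h' => hxab.1 h'.2⟩)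
    have huind : IndepSet G u := by
      rintro x ⟨hxs, hx⟩ y ⟨hys, hy⟩ hadj
      simp only [Set.mem_insert_iff, Set.mem_singleton_iff, not_or] at hx hy
      exact hs hxs hys ((hadj' x y).2 ⟨hadj, fun h' => hx.1 h'.1, fun h' => hx.2 h'.1⟩)
    set u' : Set (edgeLocalSet G a b) := Subtype.val ⁻¹' u with hu'
    have hu'ind : IndepSet (G.induce (edgeLocalSet G a b)) u' := by
      intro x hx y hy hadj
      exact huind hx hy hadj
    have himg : Subtype.val '' u' = u :=
      Set.image_preimage_eq_of_subset (by rw [Subtype.range_val]; exact husub)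
    have hu'card : u'.ncard = u.ncard := by
      rw [← himg, Set.ncard_image_of_injective _ Subtype.val_injective]
    have hsubab : ({a, b} : Set V) ⊆ s := by
      intro x hx
      simp only [Set.mem_insert_iff, Set.mem_singleton_iff] at hx
      rcases hx with rfl | rfl
      exacts [ha, hb]
    have hucard : u.ncard = s.ncard - 2 := by
      rw [hu, Set.ncard_diff hsubab, Set.ncard_pair hne]
    have := indep_ncard_le_alpha _ hu'ind
    omega
  · intro h a b hab
    have hne : a ≠ b := G.ne_of_adj hab
    have h1 : 1 ≤ alphaNum G := alpha_pos ⟨a, b, hab⟩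
    obtain ⟨t, ht, htc⟩ := exists_indep_alpha (G.induce (edgeLocalSet G a b))
    rw [h a b hab] at htc
    set t' : Set V := Subtype.val '' t with ht'def
    have ht'sub : t' ⊆ edgeLocalSet G a b := by rintro x ⟨y, hy, rfl⟩; exact y.2
    have hanot : a ∉ t' := fun hm => (mem_edgeLocalSet.1 (ht'sub hm)).2 hab.symm
    have hbnot : b ∉ t' := fun hm => (mem_edgeLocalSet.1 (ht'sub hm)).1 hab
    set G' := G.deleteEdges {s(a, b)} with hG'
    have hG'le : ∀ x y, G'.Adj x y → G.Adj x y := by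
      intro x y hxy
      rw [hG', SimpleGraph.deleteEdges_adj] at hxy
      exact hxy.1
    have hG'ab : ¬ G'.Adj a b := by
      rw [hG', SimpleGraph.deleteEdges_adj]
      simp
    have hins : IndepSet G' (insert a (insert b t')) := by
      rintro x (rfl | rfl | hx) y (rfl | rfl | hy) hadj
      · exact G'.irrefl hadj
      · exact hG'ab hadj
      · exact (mem_edgeLocalSet.1 (ht'sub hy)).1 (hG'le _ _ hadj)
      · exact hG'ab hadj.symm
      · exact G'.irrefl hadj
      · exact (mem_edgeLocalSet.1 (ht'sub hy)).2 (hG'le _ _ hadj)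
      · exact (mem_edgeLocalSet.1 (ht'sub hx)).1 (hG'le _ _ hadj).symm
      · exact (mem_edgeLocalSet.1 (ht'sub hx)).2 (hG'le _ _ hadj).symm
      · obtain ⟨x', hx', rfl⟩ := hx
        obtain ⟨y', hy', rfl⟩ := hy
        exact ht hx' hy' (hG'le _ _ hadj)
    have hcard : (insert a (insert b t')).ncard = t'.ncard + 2 := by
      rw [Set.ncard_insert_of_notMem (by simp [hanot, hne]) ((insert b t').toFinite),
        Set.ncard_insert_of_notMem hbnot (t'.toFinite)]
    have ht'card : t'.ncard = t.ncard :=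
      Set.ncard_image_of_injective t Subtype.val_injective
    have := indep_ncard_le_alpha G' hins
    omega
end
end

section
/- If p ≥ 2 and G belongs to the class W_p, then the number of vertices of G is at least p·α(G); moreover equality n(G) = p·α(G) holds if and only if G is the disjoint union of α(G) complete graphs, each on p vertices. -/
open Classical

noncomputable section

variable {V : Type*}

section MyHelpers

variable [Fintype V]

lemma myBddAlpha (G : SimpleGraph V) :
    BddAbove {n | ∃ s : Set V, IndepSet G s ∧ s.ncard = n} := by
  refine ⟨Fintype.card V, ?_⟩
  rintro n ⟨s, -, rfl⟩
  have := Set.ncard_le_ncard (Set.subset_univ s) (Set.toFinite _)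
  simpa [Set.ncard_univ, Nat.card_eq_fintype_card] using this

lemma myIndepLe (G : SimpleGraph V) {s : Set V} (hs : IndepSet G s) :
    s.ncard ≤ alphaNum G :=
  le_csSup (myBddAlpha G) ⟨s, hs, rfl⟩

lemma myExistsMax (G : SimpleGraph V) :
    ∃ s : Set V, IndepSet G s ∧ s.ncard = alphaNum G :=
by
  have h0 : (0:ℕ) ∈ {n | ∃ s : Set V, IndepSet G s ∧ s.ncard = n} :=
    ⟨∅, fun a ha => absurd ha (Set.notMem_empty a), by simp⟩
  exact Nat.sSup_mem ⟨0, h0⟩ (myBddAlpha G)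

lemma myExistsAdj (G : SimpleGraph V) {s : Set V} (hs : IndepSet G s)
    (hcard : s.ncard = alphaNum G) {x : V} (hx : x ∉ s) :
    ∃ y ∈ s, G.Adj x y := by
  by_contra h
  push_neg at h
  have hind : IndepSet G (insert x s) := by
    intro a ha b hb hab
    rcases ha with rfl | ha <;> rcases hb with rfl | hb
    · exact G.irrefl hab
    · exact h b hb hab
    · exact h a ha hab.symm
    · exact hs ha hb hab
  have hle := myIndepLe G hind
  rw [Set.ncard_insert_of_notMem hx (Set.toFinite s), hcard] at hle
  omega

lemma myNcardUnion {k : ℕ} (S : Fin k → Set V)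
    (h : ∀ i j, i ≠ j → Disjoint (S i) (S j)) :
    (⋃ i, S i).ncard = ∑ i, (S i).ncard := by
  classical
  rw [Set.ncard_eq_toFinset_card', Set.toFinset_iUnion,
    Finset.card_biUnion (fun i _ j _ hij => Set.disjoint_toFinset.mpr (h i j hij))]
  simp [Set.ncard_eq_toFinset_card']

lemma myCover (G : SimpleGraph V) {p : ℕ}
    (hEq : Fintype.card V = p * alphaNum G)
    (S : Fin p → Set V) (hd : ∀ i j, i ≠ j → Disjoint (S i) (S j))
    (hc : ∀ i, (S i).ncard = alphaNum G) : (⋃ i, S i) = Set.univ := by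
  refine Set.eq_of_subset_of_ncard_le (Set.subset_univ _) ?_ (Set.toFinite _)
  rw [Set.ncard_univ, Nat.card_eq_fintype_card, hEq, myNcardUnion S hd]
  simp [hc, mul_comm]

end MyHelpers
section MyCore

variable [Fintype V]

/-- The closed neighborhood of a single vertex. -/
def myCl (G : SimpleGraph V) (x : V) : Set V := insert x (G.neighborSet x)

lemma myMemCl (G : SimpleGraph V) (x : V) : x ∈ myCl G x := Set.mem_insert _ _

/-- In `W_p` with `n = p·α`, no vertex has `p` distinct neighbors. -/
lemma myL1 (G : SimpleGraph V) {p : ℕ} (hG : Wp p G)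
    (hEq : Fintype.card V = p * alphaNum G)
    (x : V) (f : Fin p → V) (hinj : Function.Injective f)
    (hadj : ∀ i, G.Adj x (f i)) : False := by
  obtain ⟨R, hRd, hRm, hRs⟩ := hG.2 (fun i => {f i})
    (fun i a ha b hb hab => by
      simp only [Set.mem_singleton_iff] at ha hb
      subst ha; subst hb; exact G.irrefl hab)
    (fun i j hij => Set.disjoint_singleton.mpr (fun h => hij (hinj h)))
  have hcov := myCover G hEq R hRd (fun i => (hRm i).2)
  have hx : x ∈ ⋃ i, R i := hcov ▸ Set.mem_univ x
  obtain ⟨i, hi⟩ := Set.mem_iUnion.mp hx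
  exact (hRm i).1 hi (hRs i rfl) (hadj i)

lemma myDegLe (G : SimpleGraph V) {p : ℕ} (hG : Wp p G)
    (hEq : Fintype.card V = p * alphaNum G)
    (x : V) : (G.neighborSet x).ncard ≤ p - 1 := by
  by_contra h
  push_neg at h
  have hple : p ≤ (G.neighborSet x).ncard := by
    rcases Nat.eq_zero_or_pos p with rfl | hp0
    · omega
    · omega
  obtain ⟨t, hts, htc⟩ := Set.exists_subset_card_eq hple
  haveI : Fintype ↥t := (Set.toFinite t).fintype
  have hcard : Fintype.card ↥t = p := by
    rw [← Set.toFinset_card, ← Set.ncard_eq_toFinset_card']; exact htc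
  let e := Fintype.equivFinOfCardEq hcard
  exact myL1 G hG hEq x (fun i => (e.symm i : V))
    (Subtype.val_injective.comp e.symm.injective)
    (fun i => hts (e.symm i).2)

lemma myDegGe (G : SimpleGraph V) {p : ℕ} (hp : 2 ≤ p) (hG : Wp p G)
    (hEq : Fintype.card V = p * alphaNum G)
    (x : V) : p - 1 ≤ (G.neighborSet x).ncard := by
  have h0 : (0:ℕ) < p := by omega
  set i0 : Fin p := ⟨0, h0⟩ with hi0
  obtain ⟨R, hRd, hRm, hRs⟩ := hG.2 (fun i => if i = i0 then {x} else ∅)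
    (fun i a ha b hb hab => by
      by_cases hi : i = i0 <;> simp [hi] at ha hb
      subst ha; subst hb; exact G.irrefl hab)
    (fun i j hij => by
      by_cases hi : i = i0 <;> by_cases hj : j = i0 <;>
        simp [hi, hj] at hij ⊢)
  have hx : x ∈ R i0 := hRs i0 (by simp)
  have hnot : ∀ j : Fin p, j ≠ i0 → x ∉ R j := fun j hj hxj =>
    Set.disjoint_left.mp (hRd j i0 hj) hxj hx
  have hex : ∀ j : {j : Fin p // j ≠ i0}, ∃ y, y ∈ R j.1 ∧ G.Adj x y := by
    intro j
    obtain ⟨y, hy1, hy2⟩ :=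
      myExistsAdj G (hRm j.1).1 (hRm j.1).2 (hnot j.1 j.2)
    exact ⟨y, hy1, hy2⟩
  choose ν hν1 hν2 using hex
  have ginj : Function.Injective
      (fun j : {j : Fin p // j ≠ i0} => (⟨ν j, hν2 j⟩ : ↥(G.neighborSet x))) := by
    intro a b hab
    by_contra hne
    have hne' : a.1 ≠ b.1 := fun hh => hne (Subtype.ext hh)
    have hval : ν a = ν b := congrArg Subtype.val hab
    exact Set.disjoint_left.mp (hRd a.1 b.1 hne') (hν1 a) (hval ▸ hν1 b)
  haveI : Fintype ↥(G.neighborSet x) := (Set.toFinite _).fintype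
  have hle := Fintype.card_le_of_injective _ ginj
  have hsub : Fintype.card {j : Fin p // j ≠ i0} = p - 1 := by
    have := Fintype.card_subtype_compl (fun j : Fin p => j = i0)
    simpa [Fintype.card_subtype_eq] using this
  rw [hsub] at hle
  rwa [Set.ncard_eq_toFinset_card', Set.toFinset_card]

lemma myClique (G : SimpleGraph V) {p : ℕ} (hp : 2 ≤ p) (hG : Wp p G)
    (hEq : Fintype.card V = p * alphaNum G)
    {x u w : V} (hu : G.Adj x u) (hw : G.Adj x w) (huw : u ≠ w) :
    G.Adj u w := by
  by_contra hnadj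
  have h0 : (0:ℕ) < p := by omega
  have h1 : (1:ℕ) < p := by omega
  set i0 : Fin p := ⟨0, h0⟩ with hi0
  set i1 : Fin p := ⟨1, h1⟩ with hi1
  have h01 : i0 ≠ i1 := by simp [hi0, hi1, Fin.ext_iff]
  set A : Fin p → Set V :=
    fun i => if i = i0 then {u, w} else if i = i1 then {x} else ∅ with hA
  have hAu : ∀ i a, a ∈ A i → (i = i0 ∧ (a = u ∨ a = w)) ∨ (i = i1 ∧ a = x) := by
    intro i a ha
    by_cases hi : i = i0
    · subst hi; simp [hA] at ha; exact Or.inl ⟨rfl, ha⟩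
    · by_cases hi' : i = i1
      · subst hi'; simp [hA, hi] at ha; exact Or.inr ⟨rfl, ha⟩
      · simp [hA, hi, hi'] at ha
  obtain ⟨R, hRd, hRm, hRs⟩ := hG.2 A
    (by
      intro i a ha b hb hab
      rcases hAu i a ha with ⟨hi, hau⟩ | ⟨hi, hax⟩
      · rcases hAu i b hb with ⟨hj, hbu⟩ | ⟨hj, hbx⟩
        · rcases hau with rfl | rfl <;> rcases hbu with rfl | rfl
          · exact G.irrefl hab
          · exact hnadj hab
          · exact hnadj hab.symm
          · exact G.irrefl hab
        · exact h01 (hi.symm.trans hj)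
      · rcases hAu i b hb with ⟨hj, hbu⟩ | ⟨hj, hbx⟩
        · exact h01 (hj.symm.trans hi)
        · subst hax; subst hbx; exact G.irrefl hab)
    (by
      intro i j hij
      rw [Set.disjoint_left]
      intro a hai haj
      rcases hAu i a hai with ⟨hi, hau⟩ | ⟨hi, hax⟩
      · rcases hAu j a haj with ⟨hj, hau'⟩ | ⟨hj, hax'⟩
        · exact hij (hi.trans hj.symm)
        · rcases hau with rfl | rfl
          · exact hu.ne' hax'
          · exact hw.ne' hax'
      · rcases hAu j a haj with ⟨hj, hau'⟩ | ⟨hj, hax'⟩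
        · rcases hau' with rfl | rfl
          · exact hu.ne' hax
          · exact hw.ne' hax
        · exact hij (hi.trans hj.symm))
  have hxR : x ∈ R i1 := hRs i1 (by simp [hA, h01.symm, Ne.symm h01])
  have huR : u ∈ R i0 := hRs i0 (by simp [hA])
  have hwR : w ∈ R i0 := hRs i0 (by simp [hA])
  have hnot : ∀ j : Fin p, j ≠ i1 → x ∉ R j := fun j hj hxj =>
    Set.disjoint_left.mp (hRd j i1 hj) hxj hxR
  have hex : ∀ j : {j : Fin p // j ≠ i1}, ∃ y, y ∈ R j.1 ∧ G.Adj x y := fun j =>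
    myExistsAdj G (hRm j.1).1 (hRm j.1).2 (hnot j.1 j.2)
  choose ν hν1 hν2 using hex
  set f : Fin p → V :=
    fun j => if j = i0 then u else if h : j = i1 then w else ν ⟨j, h⟩ with hf
  set c : Fin p → Fin p := fun j => if j = i1 then i0 else j with hc
  have hval0 : f i0 = u := by simp [hf]
  have hval1 : f i1 = w := by simp [hf, Ne.symm h01]
  have hmem : ∀ j : Fin p, f j ∈ R (c j) := by
    intro j
    by_cases hj0 : j = i0
    · subst hj0
      have hcj : c i0 = i0 := by simp [hc, h01]
      rw [hval0, hcj]; exact huR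
    · by_cases hj1 : j = i1
      · subst hj1
        have hcj : c i1 = i0 := by simp [hc]
        rw [hval1, hcj]; exact hwR
      · have hcj : c j = j := by simp [hc, hj1]
        have hfj : f j = ν ⟨j, hj1⟩ := by simp [hf, hj0, hj1]
        rw [hfj, hcj]; exact hν1 ⟨j, hj1⟩
  have hfadj : ∀ j, G.Adj x (f j) := by
    intro j
    by_cases hj0 : j = i0
    · subst hj0; rw [hval0]; exact hu
    · by_cases hj1 : j = i1
      · subst hj1; rw [hval1]; exact hw
      · have hfj : f j = ν ⟨j, hj1⟩ := by simp [hf, hj0, hj1]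
        rw [hfj]; exact hν2 ⟨j, hj1⟩
  have hfinj : Function.Injective f := by
    intro a b hab
    by_cases hcc : c a = c b
    · by_cases ha1 : a = i1 <;> by_cases hb1 : b = i1
      · rw [ha1, hb1]
      · have hb0 : b = i0 := by
          have := hcc.symm
          simp [hc, ha1, hb1] at this
          exact this
        rw [ha1, hb0] at hab
        rw [hval1, hval0] at hab
        exact absurd hab.symm huw
      · have ha0 : a = i0 := by
          simp [hc, ha1, hb1] at hcc
          exact hcc
        rw [ha0, hb1] at hab
        rw [hval0, hval1] at hab
        exact absurd hab huw
      · have : a = b := by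
          simp [hc, ha1, hb1] at hcc
          exact hcc
        exact this
    · have hma := hmem a
      have hmb := hmem b
      rw [← hab] at hmb
      exact absurd (Set.disjoint_left.mp (hRd _ _ hcc) hma hmb) (fun h => h)
  exact myL1 G hG hEq x f hfinj hfadj

end MyCore
section MyStruct

variable [Fintype V]

lemma myClCard (G : SimpleGraph V) {p : ℕ} (hp : 2 ≤ p) (hG : Wp p G)
    (hEq : Fintype.card V = p * alphaNum G) (x : V) :
    (myCl G x).ncard = p := by
  have h1 := myDegLe G hG hEq x
  have h2 := myDegGe G hp hG hEq x
  have hx : x ∉ G.neighborSet x := by simp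
  rw [myCl, Set.ncard_insert_of_notMem hx (Set.toFinite _)]
  omega

lemma myClClique (G : SimpleGraph V) {p : ℕ} (hp : 2 ≤ p) (hG : Wp p G)
    (hEq : Fintype.card V = p * alphaNum G) (x : V) :
    ∀ u ∈ myCl G x, ∀ w ∈ myCl G x, u ≠ w → G.Adj u w := by
  intro u hu w hw huw
  rcases Set.mem_insert_iff.mp hu with rfl | hu' <;>
    rcases Set.mem_insert_iff.mp hw with rfl | hw'
  · exact absurd rfl huw
  · exact hw'
  · have h : G.Adj w u := hu'
    exact h.symm
  · exact myClique G hp hG hEq hu' hw' huw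

lemma myClSub (G : SimpleGraph V) {p : ℕ} (hp : 2 ≤ p) (hG : Wp p G)
    (hEq : Fintype.card V = p * alphaNum G) (x y : V) (hy : y ∈ myCl G x) :
    myCl G x ⊆ myCl G y := by
  intro z hz
  by_cases hzy : z = y
  · subst hzy; exact myMemCl G z
  · exact Set.mem_insert_of_mem _
      (myClClique G hp hG hEq x y hy z hz (Ne.symm hzy))

lemma myClEq (G : SimpleGraph V) {p : ℕ} (hp : 2 ≤ p) (hG : Wp p G)
    (hEq : Fintype.card V = p * alphaNum G) (x y : V) (hy : y ∈ myCl G x) :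
    myCl G x = myCl G y := by
  have hxy : x ∈ myCl G y := by
    rcases Set.mem_insert_iff.mp hy with rfl | h
    · exact myMemCl G y
    · have h' : G.Adj x y := h
      exact Set.mem_insert_of_mem _ h'.symm
  exact Set.Subset.antisymm (myClSub G hp hG hEq x y hy) (myClSub G hp hG hEq y x hxy)

end MyStruct
theorem stmt12 [Fintype V] (G : SimpleGraph V) (p : ℕ) (hp : 2 ≤ p)
    (hG : Wp p G) :
    p * alphaNum G ≤ Fintype.card V ∧
      (Fintype.card V = p * alphaNum G ↔
        ∃ P : Fin (alphaNum G) → Set V,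
          (∀ i j, i ≠ j → Disjoint (P i) (P j)) ∧
          (⋃ i, P i) = Set.univ ∧
          (∀ i, (P i).ncard = p) ∧
          (∀ i, ∀ a ∈ P i, ∀ b ∈ P i, a ≠ b → G.Adj a b) ∧
          (∀ i j, i ≠ j → ∀ a ∈ P i, ∀ b ∈ P j, ¬ G.Adj a b)) := by
  obtain ⟨S0, hS0d, hS0m, -⟩ := hG.2 (fun _ => ∅)
    (fun i a ha => absurd ha (Set.notMem_empty a))
    (fun i j _ => by simp)
  have hineq : p * alphaNum G ≤ Fintype.card V := by
    have h1 : (⋃ i, S0 i).ncard = p * alphaNum G := by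
      rw [myNcardUnion S0 hS0d, Finset.sum_congr rfl (fun i _ => (hS0m i).2)]
      simp [mul_comm]
    have h2 := Set.ncard_le_ncard (Set.subset_univ (⋃ i, S0 i)) (Set.toFinite _)
    rw [Set.ncard_univ, Nat.card_eq_fintype_card, h1] at h2
    exact h2
  refine ⟨hineq, ?_, ?_⟩
  · intro hEq
    obtain ⟨S, hSi, hSc⟩ := myExistsMax G
    haveI : Fintype ↥S := (Set.toFinite S).fintype
    have hcS : Fintype.card ↥S = alphaNum G := by
      rw [← Set.toFinset_card, ← Set.ncard_eq_toFinset_card']; exact hSc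
    let e : Fin (alphaNum G) ≃ ↥S := (Fintype.equivFinOfCardEq hcS).symm
    have hPd : ∀ i j, i ≠ j →
        Disjoint (myCl G ((e i) : V)) (myCl G ((e j) : V)) := by
      intro i j hij
      rw [Set.disjoint_left]
      intro v hvi hvj
      have h1 := myClEq G hp hG hEq _ _ hvi
      have h2 := myClEq G hp hG hEq _ _ hvj
      have h3 : ((e j) : V) ∈ myCl G ((e i) : V) := by
        rw [h1, ← h2]; exact myMemCl G _
      rcases Set.mem_insert_iff.mp h3 with heq | hadj
      · exact hij (e.injective (Subtype.ext heq)).symm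
      · exact hSi (e i).2 (e j).2 hadj
    refine ⟨fun i => myCl G ((e i) : V), hPd, ?_,
      fun i => myClCard G hp hG hEq _, fun i => myClClique G hp hG hEq _, ?_⟩
    · ext v
      simp only [Set.mem_iUnion, Set.mem_univ, iff_true]
      by_cases hv : v ∈ S
      · refine ⟨e.symm ⟨v, hv⟩, ?_⟩
        rw [Equiv.apply_symm_apply]
        exact myMemCl G v
      · obtain ⟨y, hyS, hyadj⟩ := myExistsAdj G hSi hSc hv
        refine ⟨e.symm ⟨y, hyS⟩, ?_⟩
        rw [Equiv.apply_symm_apply]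
        exact Set.mem_insert_of_mem _ hyadj.symm
    · intro i j hij a ha b hb hadj
      have h1 := myClEq G hp hG hEq _ _ ha
      have hbmem : b ∈ myCl G ((e i) : V) := by
        rw [h1]; exact Set.mem_insert_of_mem _ hadj
      exact Set.disjoint_left.mp (hPd i j hij) hbmem hb
  · rintro ⟨P, hd, huniv, hc, -, -⟩
    have h1 : (⋃ i, P i).ncard = ∑ i, (P i).ncard := myNcardUnion P hd
    rw [huniv, Set.ncard_univ, Nat.card_eq_fintype_card] at h1
    rw [h1, Finset.sum_congr rfl (fun i _ => hc i)]
    simp [mul_comm]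
end
end

section
/- If p ≥ 2 and G is a connected, non-complete graph belonging to W_p, then every vertex of G has degree at least p. -/
open Classical

noncomputable section

variable {V : Type*}

lemma alpha_bdd [Fintype V] (G : SimpleGraph V) :
    BddAbove {n | ∃ s : Set V, IndepSet G s ∧ s.ncard = n} := by
  refine ⟨Fintype.card V, ?_⟩
  rintro n ⟨s, -, rfl⟩
  calc s.ncard ≤ (Set.univ : Set V).ncard :=
        Set.ncard_le_ncard (Set.subset_univ s) Set.finite_univ
    _ = Fintype.card V := by rw [Set.ncard_univ, Nat.card_eq_fintype_card]

lemma indep_le_alpha [Fintype V] (G : SimpleGraph V) {s : Set V} (hs : IndepSet G s) :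
    s.ncard ≤ alphaNum G :=
  le_csSup (alpha_bdd G) ⟨s, hs, rfl⟩

lemma exists_adj_of_max [Fintype V] (G : SimpleGraph V) {s : Set V} (hs : IndepSet G s)
    (hcard : s.ncard = alphaNum G) {v : V} (hv : v ∉ s) : ∃ u ∈ s, G.Adj v u := by
  by_contra h
  push_neg at h
  have hindep : IndepSet G (insert v s) := by
    intro a ha b hb hab
    rcases ha with rfl | ha
    · rcases hb with rfl | hb
      · exact G.irrefl hab
      · exact h b hb hab
    · rcases hb with rfl | hb
      · exact h a ha hab.symm
      · exact hs ha hb hab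
  have h1 : (insert v s).ncard = s.ncard + 1 := Set.ncard_insert_of_notMem hv (Set.toFinite s)
  have h2 := indep_le_alpha G hindep
  omega

lemma exists_injOn_fin [Fintype V] (T : Set V) (k p : ℕ) (hk : T.ncard ≤ k) (hkp : k ≤ p)
    (hp : 0 < p) : ∃ f : V → Fin p, Set.InjOn f T ∧ ∀ x ∈ T, (f x : ℕ) < k := by
  classical
  set F : Finset V := T.toFinset with hF
  have hFcard : F.card = T.ncard := by
    rw [hF, Set.ncard_eq_toFinset_card']
  refine ⟨fun x => if hx : x ∈ F then ⟨(F.equivFin ⟨x, hx⟩ : ℕ), by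
      have := (F.equivFin ⟨x, hx⟩).2; omega⟩ else ⟨0, hp⟩, ?_, ?_⟩
  · intro x hx y hy hxy
    have hxF : x ∈ F := by rw [hF, Set.mem_toFinset]; exact hx
    have hyF : y ∈ F := by rw [hF, Set.mem_toFinset]; exact hy
    simp only [dif_pos hxF, dif_pos hyF] at hxy
    rw [Fin.mk.injEq] at hxy
    have := F.equivFin.injective (Fin.val_injective hxy)
    exact Subtype.mk_eq_mk.mp this
  · intro x hx
    have hxF : x ∈ F := by rw [hF, Set.mem_toFinset]; exact hx
    simp only [dif_pos hxF]
    have := (F.equivFin ⟨x, hxF⟩).2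
    omega

lemma wp_partition [Fintype V] (G : SimpleGraph V) (p : ℕ) (hG : Wp p G)
    (T₀ : Set V) (f : V → Fin p) (hfi : Set.InjOn f T₀) :
    ∃ S : Fin p → Set V,
      (∀ i j, i ≠ j → Disjoint (S i) (S j)) ∧
      (∀ i, IndepSet G (S i) ∧ (S i).ncard = alphaNum G) ∧
      (∀ x ∈ T₀, x ∈ S (f x)) := by
  obtain ⟨S, Sdisj, Smax, Ssub⟩ := hG.2 (fun i => {x | x ∈ T₀ ∧ f x = i})
    (by
      intro i a ha b hb hab
      have : a = b := hfi ha.1 hb.1 (ha.2.trans hb.2.symm)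
      subst this; exact G.irrefl hab)
    (by
      intro i j hij
      rw [Set.disjoint_left]
      rintro x ⟨-, rfl⟩ ⟨-, h2⟩
      exact hij h2)
  exact ⟨S, Sdisj, Smax, fun x hx => Ssub (f x) ⟨hx, rfl⟩⟩

theorem stmt13 [Fintype V] (G : SimpleGraph V) (p : ℕ) (hp : 2 ≤ p)
    (hconn : G.Connected) (hnc : ¬ ∀ a b : V, a ≠ b → G.Adj a b)
    (hG : Wp p G) :
    ∀ v : V, p ≤ (G.neighborSet v).ncard := by
  intro v
  by_contra hlt
  push_neg at hlt
  set N := G.neighborSet v with hN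
  have hvN : v ∉ N := by simp [hN]
  set T : Set V := insert v N with hT
  have hTcard : T.ncard = N.ncard + 1 := Set.ncard_insert_of_notMem hvN (Set.toFinite N)
  by_cases hle : N.ncard ≤ p - 2
  · -- Case A : small degree
    obtain ⟨f, hfi, hfb⟩ := exists_injOn_fin T (p - 1) p (by omega) (by omega) (by omega)
    obtain ⟨S, Sdisj, Smax, Smem⟩ := wp_partition G p hG T f hfi
    have hnot : ∀ x ∈ T, x ∉ S ⟨p - 1, by omega⟩ := by
      intro x hx hxL
      have hne : f x ≠ ⟨p - 1, by omega⟩ := by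
        intro h
        have h1 := hfb x hx
        have h2 : (f x : ℕ) = p - 1 := congrArg Fin.val h
        omega
      exact Set.disjoint_left.mp (Sdisj (f x) ⟨p - 1, by omega⟩ hne) (Smem x hx) hxL
    obtain ⟨u, huS, huadj⟩ := exists_adj_of_max G (Smax ⟨p - 1, by omega⟩).1
      (Smax ⟨p - 1, by omega⟩).2 (hnot v (Set.mem_insert v N))
    exact hnot u (Set.mem_insert_of_mem v (by rwa [hN, SimpleGraph.mem_neighborSet])) huS
  · have hNcard : N.ncard = p - 1 := by omega
    by_cases huniv : T = Set.univ
    · -- Case B2 : closed neighborhood is everything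
      push_neg at hnc
      obtain ⟨a, b, hab, hnadj⟩ := hnc
      have hα2 : 2 ≤ alphaNum G := by
        have hi : IndepSet G {a, b} := by
          intro x hx y hy hadj
          simp only [Set.mem_insert_iff, Set.mem_singleton_iff] at hx hy
          rcases hx with rfl | rfl <;> rcases hy with rfl | rfl
          · exact G.irrefl hadj
          · exact hnadj hadj
          · exact hnadj hadj.symm
          · exact G.irrefl hadj
        have := indep_le_alpha G hi
        rwa [Set.ncard_pair hab] at this
      have hcardV : Fintype.card V = p := by
        have h0 := hTcard
        rw [huniv, Set.ncard_univ, Nat.card_eq_fintype_card] at h0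
        omega
      obtain ⟨S, Sdisj, Smax, -⟩ := hG.2 (fun _ => (∅ : Set V))
        (by intro i a ha b hb hadj; exact absurd ha (Set.notMem_empty a))
        (by intro i j h; simp)
      have hdisjF : ∀ i ∈ (Finset.univ : Finset (Fin p)), ∀ j ∈ Finset.univ, i ≠ j →
          Disjoint (S i).toFinset (S j).toFinset := by
        intro i _ j _ hij
        rw [Set.disjoint_toFinset]
        exact Sdisj i j hij
      have hcard := Finset.card_biUnion hdisjF
      have hsum : ∑ i : Fin p, ((S i).toFinset).card = p * alphaNum G := by
        have heach : ∀ i : Fin p, ((S i).toFinset).card = alphaNum G := by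
          intro i
          rw [← Set.ncard_eq_toFinset_card']
          exact (Smax i).2
        simp [heach, Finset.sum_const, Finset.card_univ]
      have hle2 : (Finset.univ.biUnion fun i => (S i).toFinset).card ≤ Fintype.card V :=
        Finset.card_le_univ _
      rw [hcard, hsum, hcardV] at hle2
      have := Nat.mul_le_mul_left p hα2
      omega
    · -- Case B1 : exists a vertex outside the closed neighborhood
      obtain ⟨z, hz⟩ : ∃ z, z ∉ T := by
        by_contra h
        push_neg at h
        exact huniv (Set.eq_univ_of_forall h)
      obtain ⟨d, -, hdfst, hdsnd⟩ :=
        ((hconn.preconnected v z).some).exists_boundary_dart T (Set.mem_insert v N) hz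
      have hadj : G.Adj d.fst d.snd := d.adj
      have hu1N : d.fst ∈ N := by
        rcases hdfst with h | h
        · exfalso
          apply hdsnd
          apply Set.mem_insert_of_mem
        
          rw [hN, SimpleGraph.mem_neighborSet]
          exact h ▸ hadj
        · exact h
      have hwT : d.snd ∉ T := hdsnd
      have hT3card : (insert d.snd (insert v (N \ {d.fst}))).ncard ≤ p := by
        have h1 : (N \ {d.fst}).ncard = N.ncard - 1 :=
          Set.ncard_diff_singleton_of_mem hu1N
        have h2 := Set.ncard_insert_le v (N \ {d.fst})
        have h3 := Set.ncard_insert_le d.snd (insert v (N \ {d.fst}))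
        omega
      obtain ⟨f, hfi, -⟩ := exists_injOn_fin (insert d.snd (insert v (N \ {d.fst}))) p p
        hT3card le_rfl (by omega)
      obtain ⟨S, Sdisj, Smax, Smem⟩ := wp_partition G p hG _ f hfi
      have hwT3 : d.snd ∈ insert d.snd (insert v (N \ {d.fst})) := Set.mem_insert _ _
      have hvT3 : v ∈ insert d.snd (insert v (N \ {d.fst})) :=
        Set.mem_insert_of_mem _ (Set.mem_insert _ _)
      have hvw : v ≠ d.snd := by
        intro h
        exact hwT (h ▸ Set.mem_insert v N)
      have hvnot : v ∉ S (f d.snd) := by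
        have hne : f v ≠ f d.snd := fun h => hvw (hfi hvT3 hwT3 h)
        exact Set.disjoint_left.mp (Sdisj (f v) (f d.snd) hne) (Smem v hvT3)
      obtain ⟨u, huS, huadj⟩ := exists_adj_of_max G (Smax (f d.snd)).1 (Smax (f d.snd)).2 hvnot
      have huN : u ∈ N := by rwa [hN, SimpleGraph.mem_neighborSet]
      by_cases huu : u = d.fst
      · subst huu
        exact (Smax (f d.snd)).1 huS (Smem d.snd hwT3) hadj
      · have huT3 : u ∈ insert d.snd (insert v (N \ {d.fst})) :=
          Set.mem_insert_of_mem _ (Set.mem_insert_of_mem _ ⟨huN, by simp [huu]⟩)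
        have hune : u ≠ d.snd := by
          intro h
          exact hwT (h ▸ Set.mem_insert_of_mem v huN)
        have hne2 : f u ≠ f d.snd := fun h => hune (hfi huT3 hwT3 h)
        exact Set.disjoint_left.mp (Sdisj (f u) (f d.snd) hne2) (Smem u huT3) huS
end
end

section
/- Let G be a graph without isolated vertices belonging to the class W_p, and let A be a non-maximum independent set of G. Then there exist p pairwise disjoint independent sets B_1, …, B_p, each disjoint from A, such that A ∪ B_i is a maximum independent set of G for each 1 ≤ i ≤ p. -/
open Classical

noncomputable section

variable {V : Type*}

theorem stmt14 [Fintype V] (G : SimpleGraph V) (p : ℕ) (hp : 1 ≤ p)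
    (hiso : ∀ v : V, ∃ u, G.Adj v u) (hG : Wp p G)
    (A : Set V) (hA : IndepSet G A) (hAcard : A.ncard < alphaNum G) :
    ∃ B : Fin p → Set V,
      (∀ i, IndepSet G (B i)) ∧
      (∀ i j, i ≠ j → Disjoint (B i) (B j)) ∧
      (∀ i, Disjoint A (B i)) ∧
      (∀ i, IndepSet G (A ∪ B i) ∧ (A ∪ B i).ncard = alphaNum G) := by
  suffices h : ∀ k, k ≤ p → ∃ B : Fin k → Set V,
      (∀ i, IndepSet G (B i)) ∧
      (∀ i j, i ≠ j → Disjoint (B i) (B j)) ∧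
      (∀ i, Disjoint A (B i)) ∧
      (∀ i, IndepSet G (A ∪ B i) ∧ (A ∪ B i).ncard = alphaNum G) by
    exact h p le_rfl
  intro k
  induction k with
  | zero =>
    intro _
    exact ⟨fun i => i.elim0, fun i => i.elim0, fun i => i.elim0, fun i => i.elim0,
      fun i => i.elim0⟩
  | succ k ih =>
    intro hk1
    have hkp : k < p := lt_of_lt_of_le (Nat.lt_succ_self k) hk1
    obtain ⟨B, hB1, hB2, hB3, hB4⟩ := ih (le_of_lt hkp)
    have hempty : IndepSet G (∅ : Set V) := by
      intro a ha; exact absurd ha (Set.notMem_empty a)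
    set A' : Fin p → Set V :=
      fun j => if hj : (j : ℕ) < k then B ⟨j, hj⟩ else if (j : ℕ) = k then A else ∅ with hA'
    have hA'indep : ∀ j, IndepSet G (A' j) := by
      intro j
      by_cases hj : (j : ℕ) < k
      · simpa [hA', hj] using hB1 ⟨j, hj⟩
      · by_cases hj2 : (j : ℕ) = k
        · simpa [hA', hj, hj2] using hA
        · simpa [hA', hj, hj2] using hempty
    have hA'disj : ∀ i j, i ≠ j → Disjoint (A' i) (A' j) := by
      intro i j hij
      have hvne : (i : ℕ) ≠ (j : ℕ) := fun h => hij (Fin.ext h)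
      by_cases hi : (i : ℕ) < k <;> by_cases hj : (j : ℕ) < k
      · have : (⟨(i : ℕ), hi⟩ : Fin k) ≠ ⟨(j : ℕ), hj⟩ := by
          simpa [Fin.mk.injEq] using hvne
        simpa [hA', hi, hj] using hB2 _ _ this
      · by_cases hj2 : (j : ℕ) = k
        · simpa [hA', hi, hj, hj2] using (hB3 ⟨i, hi⟩).symm
        · simp [hA', hi, hj, hj2]
      · by_cases hi2 : (i : ℕ) = k
        · simpa [hA', hi, hj, hi2] using hB3 ⟨j, hj⟩
        · simp [hA', hi, hi2]
      · by_cases hi2 : (i : ℕ) = k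
        · have hj2 : (j : ℕ) ≠ k := fun h => hvne (hi2.trans h.symm)
          simp [hA', hi, hj, hi2, hj2]
        · simp [hA', hi, hi2]
    obtain ⟨S, hS1, hS2, hS3⟩ := hG.2 A' hA'indep hA'disj
    set ik : Fin p := ⟨k, hkp⟩ with hik
    have hAsub : A ⊆ S ik := by
      have := hS3 ik
      simpa [hA', hik] using this
    have hTindep : IndepSet G (S ik) := (hS2 ik).1
    have hTcard : (S ik).ncard = alphaNum G := (hS2 ik).2
    have hTdisjB : ∀ i : Fin k, Disjoint (B i) (S ik) := by
      intro i
      have hlt : (i : ℕ) < p := lt_trans i.isLt hkp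
      have hne : (⟨(i : ℕ), hlt⟩ : Fin p) ≠ ik := by
        intro h
        exact absurd (congrArg Fin.val h) (Nat.ne_of_lt i.isLt)
      have hsub : B i ⊆ S ⟨(i : ℕ), hlt⟩ := by
        have := hS3 ⟨(i : ℕ), hlt⟩
        simpa [hA', i.isLt] using this
      exact Set.disjoint_of_subset_left hsub (hS1 _ _ hne)
    refine ⟨Fin.snoc B (S ik \ A), ?_, ?_, ?_, ?_⟩
    · intro i
      refine Fin.lastCases ?_ ?_ i
      · simp only [Fin.snoc_last]
        intro a ha b hb
        exact hTindep ha.1 hb.1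
      · intro j; simpa using hB1 j
    · intro i j hij
      have key : ∀ j : Fin k, Disjoint (S ik \ A) (B j) := by
        intro j
        exact Set.disjoint_of_subset_left Set.diff_subset (hTdisjB j).symm
      revert hij
      refine Fin.lastCases ?_ (fun m => ?_) i <;> refine Fin.lastCases ?_ (fun m' => ?_) j
      · intro h; exact absurd rfl h
      · intro _
        simp only [Fin.snoc_last, Fin.snoc_castSucc]
        exact key m'
      · intro _
        simp only [Fin.snoc_last, Fin.snoc_castSucc]
        exact (key m).symm
      · intro hne
        simp only [Fin.snoc_castSucc]
        refine hB2 m m' fun h => hne ?_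
        rw [h]
    · intro i
      refine Fin.lastCases ?_ ?_ i
      · simp only [Fin.snoc_last]
        exact Set.disjoint_sdiff_right
      · intro j; simpa using hB3 j
    · intro i
      refine Fin.lastCases ?_ ?_ i
      · have hunion : A ∪ (S ik \ A) = S ik := Set.union_diff_cancel hAsub
        simp only [Fin.snoc_last, hunion]
        exact ⟨hTindep, hTcard⟩
      · intro j; simpa using hB4 j
end
end

section
/- Let p ≥ 2 and let G be a graph in W_p without isolated vertices, and let A be a non-maximum independent set of G. Then there exist p − 1 pairwise disjoint maximum independent sets S_1, …, S_{p−1} of G, each disjoint from A. -/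
open Classical

noncomputable section

variable {V : Type*}

theorem stmt15 [Fintype V] (G : SimpleGraph V) (p : ℕ) (hp : 2 ≤ p)
    (hiso : ∀ v : V, ∃ u, G.Adj v u) (hG : Wp p G)
    (A : Set V) (hA : IndepSet G A) (hAcard : A.ncard < alphaNum G) :
    ∃ S : Fin (p - 1) → Set V,
      (∀ i j, i ≠ j → Disjoint (S i) (S j)) ∧
      (∀ i, IndepSet G (S i) ∧ (S i).ncard = alphaNum G) ∧
      (∀ i, Disjoint A (S i)) := by
  obtain ⟨hcard, hW⟩ := hG
  set A' : Fin p → Set V := fun i => if i.1 = 0 then A else ∅ with hA'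
  obtain ⟨S, hdisj, hmax, hsub⟩ := hW A'
    (by
      intro i
      by_cases h : i.1 = 0
      · simpa [hA', h] using hA
      · simp [hA', h, IndepSet])
    (by
      intro i j hij
      rcases eq_or_ne i.1 0 with h | h
      · have : j.1 ≠ 0 := by
          intro hj; exact hij (Fin.ext (h.trans hj.symm))
        simp [hA', h, this]
      · simp [hA', h])
  have hp0 : 0 < p := by omega
  refine ⟨fun i => S ⟨i.1 + 1, by omega⟩, ?_, ?_, ?_⟩
  · intro i j hij
    apply hdisj
    intro h
    apply hij
    have : i.1 + 1 = j.1 + 1 := congrArg Fin.val h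
    exact Fin.ext (by omega)
  · intro i; exact hmax _
  · intro i
    have h0 : A ⊆ S ⟨0, hp0⟩ := by
      have := hsub ⟨0, hp0⟩
      simpa [hA'] using this
    have hne : (⟨0, hp0⟩ : Fin p) ≠ ⟨i.1 + 1, by omega⟩ := by
      intro h
      have : (0 : ℕ) = i.1 + 1 := congrArg Fin.val h
      omega
    exact (hdisj _ _ hne).mono_left h0
end
end

section
/- Let p ≥ 1 and let G be a graph with α(G) ≥ 2. Then G belongs to W_p if and only if for every vertex x of G, the localization G_x belongs to W_p and α(G_x) = α(G) − 1. -/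
open Classical

noncomputable section

variable {V : Type*}

namespace Stmt17Aux

lemma indep_mono {V : Type*} {G : SimpleGraph V} {s t : Set V} (h : s ⊆ t)
    (ht : IndepSet G t) : IndepSet G s := fun _ ha _ hb => ht (h ha) (h hb)

lemma indep_empty {V : Type*} (G : SimpleGraph V) : IndepSet G (∅ : Set V) := by
  intro a ha; simp at ha

lemma alpha_bddAbove {V : Type*} [Fintype V] (G : SimpleGraph V) :
    BddAbove {n | ∃ s : Set V, IndepSet G s ∧ s.ncard = n} := by
  refine ⟨Fintype.card V, ?_⟩
  rintro n ⟨s, -, rfl⟩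
  simpa [Set.ncard_univ] using Set.ncard_le_ncard (Set.subset_univ s) (Set.toFinite _)

lemma ncard_le_alpha {V : Type*} [Fintype V] {G : SimpleGraph V} {s : Set V}
    (hs : IndepSet G s) : s.ncard ≤ alphaNum G :=
  le_csSup (alpha_bddAbove G) ⟨s, hs, rfl⟩

lemma exists_max_indep {V : Type*} [Fintype V] (G : SimpleGraph V) :
    ∃ s : Set V, IndepSet G s ∧ s.ncard = alphaNum G := by
  have h : alphaNum G ∈ {n | ∃ s : Set V, IndepSet G s ∧ s.ncard = n} :=
    Nat.sSup_mem ⟨0, ∅, indep_empty G, by simp⟩ (alpha_bddAbove G)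
  exact h

lemma closedNbhd_singleton {V : Type*} (G : SimpleGraph V) (x : V) :
    closedNbhd G {x} = insert x {v | G.Adj x v} := by
  ext v
  simp only [closedNbhd, openNbhd, Set.mem_union, Set.mem_singleton_iff, Set.mem_setOf_eq,
    Set.mem_insert_iff]
  constructor
  · rintro (rfl | ⟨-, u, rfl, h⟩)
    · exact Or.inl rfl
    · exact Or.inr h
  · rintro (rfl | h)
    · exact Or.inl rfl
    · by_cases hv : v = x
      · exact Or.inl hv
      · exact Or.inr ⟨hv, x, rfl, h⟩

lemma mem_localSet {V : Type*} {G : SimpleGraph V} {x v : V} :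
    v ∈ localSet G {x} ↔ v ≠ x ∧ ¬ G.Adj x v := by
  simp [localSet, closedNbhd_singleton, not_or]

lemma x_mem_closedNbhd {V : Type*} (G : SimpleGraph V) (x : V) :
    x ∈ closedNbhd G {x} := by
  simp [closedNbhd_singleton]

lemma indep_induce_iff {V : Type*} {G : SimpleGraph V} {S : Set V} {t : Set S} :
    IndepSet (G.induce S) t ↔ IndepSet G (Subtype.val '' t) := by
  constructor
  · rintro h a ⟨a', ha', rfl⟩ b ⟨b', hb', rfl⟩ hab
    exact h ha' hb' (by simpa using hab)
  · intro h a ha b hb hab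
    exact h ⟨a, ha, rfl⟩ ⟨b, hb, rfl⟩ (by simpa using hab)

lemma image_preimage_val {V : Type*} {S s : Set V} (hsub : s ⊆ S) :
    Subtype.val '' (Subtype.val ⁻¹' s : Set S) = s := by
  rw [Subtype.image_preimage_coe]
  exact Set.inter_eq_right.2 hsub

lemma le_alpha_induce {V : Type*} [Fintype V] {G : SimpleGraph V} {S s : Set V}
    (hsub : s ⊆ S) (hs : IndepSet G s) : s.ncard ≤ alphaNum (G.induce S) := by
  have h1 : IndepSet (G.induce S) (Subtype.val ⁻¹' s) := by
    rw [indep_induce_iff, image_preimage_val hsub]; exact hs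
  have h2 : (Subtype.val ⁻¹' s : Set S).ncard = s.ncard := by
    conv_rhs => rw [← image_preimage_val hsub]
    exact (Set.ncard_image_of_injective _ Subtype.val_injective).symm
  rw [← h2]; exact ncard_le_alpha h1

lemma exists_max_indep_induce {V : Type*} [Fintype V] (G : SimpleGraph V) (S : Set V) :
    ∃ s : Set V, s ⊆ S ∧ IndepSet G s ∧ s.ncard = alphaNum (G.induce S) := by
  obtain ⟨t, ht, hcard⟩ := exists_max_indep (G.induce S)
  refine ⟨Subtype.val '' t, ?_, indep_induce_iff.1 ht, ?_⟩
  · rintro v ⟨v', -, rfl⟩; exact v'.2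
  · rw [Set.ncard_image_of_injective _ Subtype.val_injective]; exact hcard

end Stmt17Aux
namespace Stmt17Aux

lemma wp_induce_apply {V : Type*} [Fintype V] {G : SimpleGraph V} {p : ℕ} {S : Set V}
    (h : Wp p (G.induce S)) (B : Fin p → Set V)
    (hBS : ∀ i, B i ⊆ S) (hBi : ∀ i, IndepSet G (B i))
    (hBd : ∀ i j, i ≠ j → Disjoint (B i) (B j)) :
    ∃ T : Fin p → Set V, (∀ i, T i ⊆ S) ∧ (∀ i j, i ≠ j → Disjoint (T i) (T j)) ∧
      (∀ i, IndepSet G (T i) ∧ (T i).ncard = alphaNum (G.induce S)) ∧ ∀ i, B i ⊆ T i := by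
  obtain ⟨T', hTd, hTm, hTsub⟩ := h.2 (fun i => Subtype.val ⁻¹' B i)
    (fun i => by rw [indep_induce_iff, image_preimage_val (hBS i)]; exact hBi i)
    (fun i j hij => (hBd i j hij).preimage _)
  refine ⟨fun i => Subtype.val '' T' i, fun i => ?_, fun i j hij => ?_, fun i => ?_, fun i => ?_⟩
  · rintro v ⟨v', -, rfl⟩; exact v'.2
  · exact (Set.disjoint_image_iff Subtype.val_injective).2 (hTd i j hij)
  · exact ⟨indep_induce_iff.1 (hTm i).1,
      by rw [Set.ncard_image_of_injective _ Subtype.val_injective]; exact (hTm i).2⟩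
  · conv_lhs => rw [← image_preimage_val (hBS i)]
    exact Set.image_mono (hTsub i)

lemma wp_induce_of {V : Type*} [Fintype V] {G : SimpleGraph V} {p : ℕ} {S : Set V}
    (hcard : p ≤ Fintype.card S)
    (h : ∀ A : Fin p → Set V, (∀ i, A i ⊆ S) → (∀ i, IndepSet G (A i)) →
        (∀ i j, i ≠ j → Disjoint (A i) (A j)) →
        ∃ T : Fin p → Set V, (∀ i, T i ⊆ S) ∧ (∀ i j, i ≠ j → Disjoint (T i) (T j)) ∧
          (∀ i, IndepSet G (T i) ∧ (T i).ncard = alphaNum (G.induce S)) ∧ ∀ i, A i ⊆ T i) :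
    Wp p (G.induce S) := by
  refine ⟨hcard, fun A hAi hAd => ?_⟩
  obtain ⟨T, hTS, hTd, hTm, hTsub⟩ := h (fun i => Subtype.val '' A i)
    (fun i => by rintro v ⟨v', -, rfl⟩; exact v'.2)
    (fun i => indep_induce_iff.1 (hAi i))
    (fun i j hij => (Set.disjoint_image_iff Subtype.val_injective).2 (hAd i j hij))
  refine ⟨fun i => Subtype.val ⁻¹' T i, fun i j hij => (hTd i j hij).preimage _,
    fun i => ⟨?_, ?_⟩, fun i a ha => ?_⟩
  · rw [indep_induce_iff, image_preimage_val (hTS i)]; exact (hTm i).1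
  · have : (Subtype.val ⁻¹' T i : Set S).ncard = (T i).ncard := by
      conv_rhs => rw [← image_preimage_val (hTS i)]
      exact (Set.ncard_image_of_injective _ Subtype.val_injective).symm
    rw [this]; exact (hTm i).2
  · exact hTsub i ⟨a, ha, rfl⟩

lemma insert_indep_of_localSet {V : Type*} {G : SimpleGraph V} {x : V} {s : Set V}
    (hsub : s ⊆ localSet G {x}) (hs : IndepSet G s) : IndepSet G (insert x s) := by
  rintro a (rfl | ha) b (rfl | hb) hab
  · exact G.irrefl hab
  · exact (mem_localSet.1 (hsub hb)).2 hab
  · exact (mem_localSet.1 (hsub ha)).2 hab.symm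
  · exact hs ha hb hab

lemma inter_closedNbhd_of_mem {V : Type*} {G : SimpleGraph V} {x : V} {s : Set V}
    (hs : IndepSet G s) (hx : x ∈ s) : s ∩ closedNbhd G {x} = {x} := by
  ext v
  rw [closedNbhd_singleton]
  constructor
  · rintro ⟨hv, (rfl | hadj)⟩
    · rfl
    · exact absurd hadj (hs hx hv)
  · rintro rfl; exact ⟨hx, Or.inl rfl⟩

lemma one_le_inter_closedNbhd {V : Type*} [Fintype V] {G : SimpleGraph V} {x : V} {s : Set V}
    (hs : IndepSet G s) (hcard : s.ncard = alphaNum G) :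
    1 ≤ (s ∩ closedNbhd G {x}).ncard := by
  by_contra h
  have hempty : s ∩ closedNbhd G {x} = ∅ := by
    rw [← Set.ncard_eq_zero (Set.toFinite _)]; omega
  have hsub : s ⊆ localSet G {x} := by
    intro v hv
    simp only [localSet, Set.mem_compl_iff]
    intro hvK
    exact absurd (Set.mem_inter hv hvK) (by rw [hempty]; exact id)
  have hxs : x ∉ s := fun hxs => (hsub hxs) (x_mem_closedNbhd G x)
  have := ncard_le_alpha (insert_indep_of_localSet hsub hs)
  rw [Set.ncard_insert_of_notMem hxs, hcard] at this
  omega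

end Stmt17Aux
namespace Stmt17Aux

lemma fwd_main {V : Type*} [Fintype V] {G : SimpleGraph V} {p : ℕ}
    (halpha : 1 ≤ alphaNum G) (hW : Wp p G) (x : V) (A : Fin p → Set V)
    (hAS : ∀ i, A i ⊆ localSet G {x}) (hAi : ∀ i, IndepSet G (A i))
    (hAd : ∀ i j, i ≠ j → Disjoint (A i) (A j)) :
    ∃ T : Fin p → Set V, (∀ i, T i ⊆ localSet G {x}) ∧
      (∀ i j, i ≠ j → Disjoint (T i) (T j)) ∧
      (∀ i, IndepSet G (T i) ∧ (T i).ncard = alphaNum G - 1) ∧ (∀ i, A i ⊆ T i) := by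
  classical
  set K := closedNbhd G {x} with hK
  set Fam : (Fin p → Set V) → Prop := fun S =>
    (∀ i j, i ≠ j → Disjoint (S i) (S j)) ∧
    (∀ i, IndepSet G (S i) ∧ (S i).ncard = alphaNum G) ∧ (∀ i, A i ⊆ S i) with hFamdef
  have hne : ∃ S, Fam S := by
    obtain ⟨S, h1, h2, h3⟩ := hW.2 A hAi hAd; exact ⟨S, h1, h2, h3⟩
  set M : Set ℕ := {n | ∃ S, Fam S ∧ (∑ i, (S i ∩ K).ncard) = n} with hM
  have hMne : M.Nonempty := ⟨_, hne.choose, hne.choose_spec, rfl⟩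
  obtain ⟨S, hFamS, hsum⟩ : sInf M ∈ M := Nat.sInf_mem hMne
  have hge1 : ∀ i, 1 ≤ (S i ∩ K).ncard := fun i =>
    one_le_inter_closedNbhd (hFamS.2.1 i).1 (hFamS.2.1 i).2
  have hle1 : ∀ i, (S i ∩ K).ncard ≤ 1 := by
    by_contra hcon
    push_neg at hcon
    obtain ⟨j, hj⟩ := hcon
    have hxj : x ∉ S j := by
      intro hxj
      rw [inter_closedNbhd_of_mem (hFamS.2.1 j).1 hxj] at hj
      simp at hj
    set E : Fin p → Set V := fun i =>
      if i = j then (S j \ {v | G.Adj x v}) ∪ {x} else S i \ {x} with hE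
    have hExj : x ∈ E j := by simp [hE]
    have hEind : ∀ i, IndepSet G (E i) := by
      intro i
      rcases eq_or_ne i j with rfl | hij
      · simp only [hE, if_pos rfl]
        intro a ha b hb hab
        simp only [Set.mem_union, Set.mem_diff, Set.mem_setOf_eq,
          Set.mem_singleton_iff] at ha hb
        rcases ha with ⟨haS, hax⟩ | rfl
        · rcases hb with ⟨hbS, hbx⟩ | rfl
          · exact (hFamS.2.1 i).1 haS hbS hab
          · exact hax hab.symm
        · rcases hb with ⟨hbS, hbx⟩ | rfl
          · exact hbx hab
          · exact G.irrefl hab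
      · simp only [hE, if_neg hij]
        exact indep_mono Set.diff_subset (hFamS.2.1 i).1
    have hEd : ∀ a b, a ≠ b → Disjoint (E a) (E b) := by
      have key : ∀ b, b ≠ j → Disjoint (E j) (E b) := by
        intro b hb
        simp only [hE, if_pos rfl, if_neg hb]
        refine Set.disjoint_union_left.2 ⟨?_, ?_⟩
        · exact (hFamS.1 j b (Ne.symm hb)).mono Set.diff_subset Set.diff_subset
        · rw [Set.disjoint_singleton_left]; simp
      intro a b hab
      rcases eq_or_ne a j with rfl | ha
      · exact key b (Ne.symm hab)
      · rcases eq_or_ne b j with rfl | hb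
        · exact (key a ha).symm
        · simp only [hE, if_neg ha, if_neg hb]
          exact (hFamS.1 a b hab).mono Set.diff_subset Set.diff_subset
    obtain ⟨R, hRd, hRm, hRsub⟩ := hW.2 E hEind hEd
    have hxR : x ∈ R j := hRsub j hExj
    have hARsub : ∀ i, A i ⊆ R i := by
      intro i a ha
      refine hRsub i ?_
      rcases eq_or_ne i j with rfl | hij
      · simp only [hE, if_pos rfl, Set.mem_union, Set.mem_diff, Set.mem_setOf_eq]
        exact Or.inl ⟨hFamS.2.2 i ha, (mem_localSet.1 (hAS i ha)).2⟩
      · simp only [hE, if_neg hij, Set.mem_diff, Set.mem_singleton_iff]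
        exact ⟨hFamS.2.2 i ha, (mem_localSet.1 (hAS i ha)).1⟩
    have hFamR : Fam R := ⟨hRd, hRm, hARsub⟩
    have hterm : ∀ i, (R i ∩ K).ncard ≤ (S i ∩ K).ncard := by
      intro i
      rcases eq_or_ne i j with rfl | hij
      · rw [inter_closedNbhd_of_mem (hRm i).1 hxR]
        simpa using hj.le
      · by_cases hxS : x ∈ S i
        · rw [inter_closedNbhd_of_mem (hFamS.2.1 i).1 hxS]
          have hsub1 : S i \ {x} ⊆ R i := by
            have h1 := hRsub i
            simp only [hE, if_neg hij] at h1
            exact h1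
          have hSiK : S i ∩ K = {x} := inter_closedNbhd_of_mem (hFamS.2.1 i).1 hxS
          have hRiK : R i ∩ K ⊆ R i \ (S i \ {x}) := by
            rintro v ⟨hvR, hvK⟩
            refine ⟨hvR, fun hv => ?_⟩
            have : v ∈ S i ∩ K := ⟨hv.1, hvK⟩
            rw [hSiK] at this
            exact hv.2 this
          have hc1 : (R i \ (S i \ {x})).ncard = 1 := by
            rw [Set.ncard_diff hsub1 (Set.toFinite _), (hRm i).2,
              Set.ncard_diff_singleton_of_mem hxS, (hFamS.2.1 i).2]
            omega
          calc (R i ∩ K).ncard ≤ (R i \ (S i \ {x})).ncard :=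
                Set.ncard_le_ncard hRiK (Set.toFinite _)
            _ = 1 := hc1
            _ ≤ ({x} : Set V).ncard := by simp
        · have hsub1 : S i ⊆ R i := by
            have h1 := hRsub i
            simp only [hE, if_neg hij] at h1
            intro v hv
            exact h1 ⟨hv, fun h => hxS (h ▸ hv)⟩
          have hSR : S i = R i :=
            Set.eq_of_subset_of_ncard_le hsub1
              (by rw [(hRm i).2, (hFamS.2.1 i).2]) (Set.toFinite _)
          rw [← hSR]
    have hstrictj : (R j ∩ K).ncard < (S j ∩ K).ncard := by
      rw [inter_closedNbhd_of_mem (hRm j).1 hxR]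
      simpa using hj
    have hlt : (∑ i, (R i ∩ K).ncard) < ∑ i, (S i ∩ K).ncard :=
      Finset.sum_lt_sum (fun i _ => hterm i) ⟨j, Finset.mem_univ j, hstrictj⟩
    have hmem : (∑ i, (R i ∩ K).ncard) ∈ M := ⟨R, hFamR, rfl⟩
    have := Nat.sInf_le hmem
    omega
  have heq1 : ∀ i, (S i ∩ K).ncard = 1 := fun i => le_antisymm (hle1 i) (hge1 i)
  refine ⟨fun i => S i \ K, fun i => fun v hv => hv.2, fun i j hij =>
    (hFamS.1 i j hij).mono Set.diff_subset Set.diff_subset, fun i => ⟨?_, ?_⟩, fun i a ha => ?_⟩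
  · exact indep_mono Set.diff_subset (hFamS.2.1 i).1
  · show (S i \ K).ncard = alphaNum G - 1
    rw [← Set.diff_self_inter, Set.ncard_diff Set.inter_subset_left (Set.toFinite _),
      heq1 i, (hFamS.2.1 i).2]
  · exact ⟨hFamS.2.2 i ha, hAS i ha⟩
end Stmt17Aux
namespace Stmt17Aux

lemma alpha_induce_localSet_le {V : Type*} [Fintype V] (G : SimpleGraph V) (x : V) :
    alphaNum (G.induce (localSet G {x})) + 1 ≤ alphaNum G := by
  obtain ⟨s, hsub, hs, hcard⟩ := exists_max_indep_induce G (localSet G {x})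
  have hx : x ∉ s := fun hx => (mem_localSet.1 (hsub hx)).1 rfl
  have hins : IndepSet G (insert x s) := insert_indep_of_localSet hsub hs
  have := ncard_le_alpha hins
  rw [Set.ncard_insert_of_notMem hx, hcard] at this
  omega

lemma grow_step {V : Type*} [Fintype V] {G : SimpleGraph V} {p : ℕ}
    (halpha : 2 ≤ alphaNum G)
    (hyp : ∀ x : V, Wp p (G.induce (localSet G {x})) ∧
      alphaNum (G.induce (localSet G {x})) = alphaNum G - 1)
    (A : Fin p → Set V) (hAi : ∀ i, IndepSet G (A i))
    (hAd : ∀ i j, i ≠ j → Disjoint (A i) (A j)) (j : Fin p)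
    (hlt : (A j).ncard < alphaNum G) :
    ∃ v, (∀ i, v ∉ A i) ∧ IndepSet G (insert v (A j)) := by
  classical
  have hVne : Nonempty V := by
    obtain ⟨s, hs, hcard⟩ := exists_max_indep G
    have : s.Nonempty := Set.nonempty_of_ncard_ne_zero (by omega)
    exact ⟨this.choose⟩
  -- choose x
  obtain ⟨x, hxcase⟩ : ∃ x : V, x ∈ A j ∨ A j = ∅ := by
    rcases (A j).eq_empty_or_nonempty with he | ⟨x, hx⟩
    · exact ⟨Classical.arbitrary V, Or.inr he⟩
    · exact ⟨x, Or.inl hx⟩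
  set K := closedNbhd G {x} with hK
  set B : Fin p → Set V := fun i => A i \ K with hB
  have hBS : ∀ i, B i ⊆ localSet G {x} := fun i v hv => hv.2
  have hBi : ∀ i, IndepSet G (B i) := fun i => indep_mono Set.diff_subset (hAi i)
  have hBd : ∀ i j', i ≠ j' → Disjoint (B i) (B j') := fun i j' h =>
    (hAd i j' h).mono Set.diff_subset Set.diff_subset
  obtain ⟨T, hTS, hTd, hTm, hTsub⟩ := wp_induce_apply (hyp x).1 B hBS hBi hBd
  have hTcard : ∀ i, (T i).ncard = alphaNum G - 1 := fun i => by
    rw [(hTm i).2, (hyp x).2]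
  have hBj : (B j).ncard < alphaNum G - 1 := by
    rcases hxcase with hx | he
    · have hinter : A j ∩ K = {x} := inter_closedNbhd_of_mem (hAi j) hx
      have h1 : B j = A j \ (A j ∩ K) := by rw [Set.diff_self_inter]
      have h2 : (B j).ncard = (A j).ncard - 1 := by
        rw [h1, Set.ncard_diff Set.inter_subset_left (Set.toFinite _), hinter, Set.ncard_singleton]
      have h3 : 1 ≤ (A j).ncard := (Set.ncard_pos (Set.toFinite _)).2 ⟨x, hx⟩
      omega
    · have : B j = ∅ := by rw [hB]; simp [he]
      rw [this]
      simp only [Set.ncard_empty]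
      omega
  obtain ⟨v, hvT, hvB⟩ : ∃ v, v ∈ T j ∧ v ∉ B j := by
    by_contra hcon
    push_neg at hcon
    have : T j ⊆ B j := hcon
    have := Set.ncard_le_ncard this (Set.toFinite _)
    rw [hTcard j] at this
    omega
  have hvloc : v ∈ localSet G {x} := hTS j hvT
  have hvadj : ∀ b ∈ A j, ¬ G.Adj v b ∧ ¬ G.Adj b v := by
    intro b hb
    by_cases hbK : b ∈ K
    · rcases hxcase with hx | he
      · have : b ∈ A j ∩ K := ⟨hb, hbK⟩
        rw [inter_closedNbhd_of_mem (hAi j) hx] at this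
        subst this
        have hnadj : ¬ G.Adj b v := (mem_localSet.1 hvloc).2
        exact ⟨fun h => hnadj h.symm, hnadj⟩
      · rw [he] at hb; exact absurd hb (Set.notMem_empty b)
    · have hbB : b ∈ B j := ⟨hb, hbK⟩
      have hbT : b ∈ T j := hTsub j hbB
      exact ⟨(hTm j).1 hvT hbT, (hTm j).1 hbT hvT⟩
  refine ⟨v, fun i => ?_, ?_⟩
  · intro hvA
    have hvK : v ∉ K := hvloc
    have hvBi : v ∈ B i := ⟨hvA, hvK⟩
    rcases eq_or_ne i j with rfl | hij
    · exact hvB hvBi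
    · exact Set.disjoint_left.1 (hTd i j hij) (hTsub i hvBi) hvT
  · intro a ha b hb hab
    rcases ha with rfl | ha
    · rcases hb with rfl | hb
      · exact G.irrefl hab
      · exact (hvadj b hb).1 hab
    · rcases hb with rfl | hb
      · exact (hvadj a ha).2 hab
      · exact hAi j ha hb hab

lemma grow {V : Type*} [Fintype V] {G : SimpleGraph V} {p : ℕ}
    (halpha : 2 ≤ alphaNum G)
    (hyp : ∀ x : V, Wp p (G.induce (localSet G {x})) ∧
      alphaNum (G.induce (localSet G {x})) = alphaNum G - 1) :
    ∀ n (A : Fin p → Set V), (∀ i, IndepSet G (A i)) →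
      (∀ i j, i ≠ j → Disjoint (A i) (A j)) →
      (∑ i, (alphaNum G - (A i).ncard)) ≤ n →
      ∃ S : Fin p → Set V, (∀ i j, i ≠ j → Disjoint (S i) (S j)) ∧
        (∀ i, IndepSet G (S i) ∧ (S i).ncard = alphaNum G) ∧ (∀ i, A i ⊆ S i) := by
  classical
  intro n
  induction n with
  | zero =>
    intro A hAi hAd hsum
    refine ⟨A, hAd, fun i => ⟨hAi i, ?_⟩, fun i => subset_rfl⟩
    have h1 : alphaNum G - (A i).ncard = 0 :=
      Nat.eq_zero_of_le_zero (le_trans (Finset.single_le_sum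
        (f := fun i => alphaNum G - (A i).ncard) (fun _ _ => Nat.zero_le _)
        (Finset.mem_univ i)) hsum)
    have h2 := ncard_le_alpha (hAi i)
    omega
  | succ n ih =>
    intro A hAi hAd hsum
    by_cases hex : ∃ j, (A j).ncard < alphaNum G
    · obtain ⟨j, hj⟩ := hex
      obtain ⟨v, hvA, hvind⟩ := grow_step halpha hyp A hAi hAd j hj
      set A' : Fin p → Set V := Function.update A j (insert v (A j)) with hA'
      have hA'i : ∀ i, IndepSet G (A' i) := by
        intro i
        rcases eq_or_ne i j with rfl | hij
        · rw [hA', Function.update_self]; exact hvind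
        · rw [hA', Function.update_of_ne hij]; exact hAi i
      have hsubA : ∀ i, A i ⊆ A' i := by
        intro i
        rcases eq_or_ne i j with rfl | hij
        · rw [hA', Function.update_self]; exact Set.subset_insert _ _
        · rw [hA', Function.update_of_ne hij]
      have hA'd : ∀ i j', i ≠ j' → Disjoint (A' i) (A' j') := by
        have key : ∀ i, i ≠ j → Disjoint (A' j) (A' i) := by
          intro i hij
          rw [hA', Function.update_self, Function.update_of_ne hij]
          exact Set.disjoint_left.2 (by rintro a (rfl | haA) haI; exacts [hvA i haI, Set.disjoint_left.1 (hAd j i (Ne.symm hij)) haA haI])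
        intro a b hab
        rcases eq_or_ne a j with rfl | ha
        · exact key b (Ne.symm hab)
        · rcases eq_or_ne b j with rfl | hb
          · exact (key a ha).symm
          · rw [hA', Function.update_of_ne ha, Function.update_of_ne hb]
            exact hAd a b hab
      have hcard' : (A' j).ncard = (A j).ncard + 1 := by
        rw [hA', Function.update_self, Set.ncard_insert_of_notMem (hvA j)]
      have hsum' : (∑ i, (alphaNum G - (A' i).ncard)) ≤ n := by
        have e1 : ∑ i, (alphaNum G - (A i).ncard) =
            (alphaNum G - (A j).ncard) + ∑ i ∈ Finset.univ.erase j, (alphaNum G - (A i).ncard) :=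
          (Finset.add_sum_erase _ _ (Finset.mem_univ j)).symm
        have e2 : ∑ i, (alphaNum G - (A' i).ncard) =
            (alphaNum G - (A' j).ncard) + ∑ i ∈ Finset.univ.erase j, (alphaNum G - (A' i).ncard) :=
          (Finset.add_sum_erase _ _ (Finset.mem_univ j)).symm
        have e3 : ∑ i ∈ Finset.univ.erase j, (alphaNum G - (A' i).ncard) =
            ∑ i ∈ Finset.univ.erase j, (alphaNum G - (A i).ncard) := by
          refine Finset.sum_congr rfl fun i hi => ?_
          rw [hA', Function.update_of_ne (Finset.ne_of_mem_erase hi)]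
        rw [e2, e3, hcard']
        rw [e1] at hsum
        omega
      obtain ⟨S, hSd, hSm, hSsub⟩ := ih A' hA'i hA'd hsum'
      exact ⟨S, hSd, hSm, fun i => (hsubA i).trans (hSsub i)⟩
    · push_neg at hex
      refine ⟨A, hAd, fun i => ⟨hAi i, le_antisymm (ncard_le_alpha (hAi i)) (hex i)⟩,
        fun i => subset_rfl⟩

end Stmt17Aux
theorem stmt17 [Fintype V] (G : SimpleGraph V) (p : ℕ) (hp : 1 ≤ p)
    (halpha : 2 ≤ alphaNum G) :
    Wp p G ↔
      ∀ x : V, Wp p (G.induce (localSet G {x})) ∧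
        alphaNum (G.induce (localSet G {x})) = alphaNum G - 1 := by
  classical
  constructor
  · intro hW x
    have halpha1 : 1 ≤ alphaNum G := by omega
    obtain ⟨T, hTS, hTd, hTm, hTsub⟩ := Stmt17Aux.fwd_main halpha1 hW x (fun _ => (∅ : Set V))
      (fun i => Set.empty_subset _) (fun i => Stmt17Aux.indep_empty G)
      (fun i j h => by simp)
    have hle := Stmt17Aux.alpha_induce_localSet_le G x
    have hge : alphaNum G - 1 ≤ alphaNum (G.induce (localSet G {x})) := by
      have i0 : Fin p := ⟨0, hp⟩
      have h := Stmt17Aux.le_alpha_induce (hTS i0) (hTm i0).1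
      rw [(hTm i0).2] at h
      exact h
    have hxeq : alphaNum (G.induce (localSet G {x})) = alphaNum G - 1 := by omega
    have hTne : ∀ i, (T i).Nonempty := fun i =>
      Set.nonempty_of_ncard_ne_zero (by rw [(hTm i).2]; omega)
    have hcard : p ≤ Fintype.card (localSet G {x}) := by
      have hinj : Function.Injective (fun i : Fin p =>
          (⟨(hTne i).choose, hTS i (hTne i).choose_spec⟩ : localSet G {x})) := by
        intro i j hij
        by_contra hne
        have h1 : (hTne i).choose ∈ T i := (hTne i).choose_spec
        have h2 : (hTne i).choose ∈ T j := by
          have he : (hTne i).choose = (hTne j).choose := congrArg Subtype.val hij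
          rw [he]; exact (hTne j).choose_spec
        exact Set.disjoint_left.1 (hTd i j hne) h1 h2
      simpa using Fintype.card_le_of_injective _ hinj
    refine ⟨Stmt17Aux.wp_induce_of hcard ?_, hxeq⟩
    intro B hBS hBi hBd
    obtain ⟨T', h1, h2, h3, h4⟩ := Stmt17Aux.fwd_main halpha1 hW x B hBS hBi hBd
    exact ⟨T', h1, h2, fun i => ⟨(h3 i).1, by rw [(h3 i).2, hxeq]⟩, h4⟩
  · intro hyp
    have hVne : Nonempty V := by
      obtain ⟨s, hs, hcard⟩ := Stmt17Aux.exists_max_indep G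
      have hne : s.Nonempty := Set.nonempty_of_ncard_ne_zero (by omega)
      exact ⟨hne.choose⟩
    refine ⟨?_, ?_⟩
    · obtain ⟨x⟩ := hVne
      calc p ≤ Fintype.card (localSet G {x}) := (hyp x).1.1
        _ ≤ Fintype.card V := Fintype.card_le_of_injective _ Subtype.val_injective
    · intro A hAi hAd
      exact Stmt17Aux.grow halpha hyp (∑ i, (alphaNum G - (A i).ncard)) A hAi hAd le_rfl
end
end
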